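/- The set {1, L₂ + L₃, L₂² + L₃²} is a ℤ-basis of the centre of the group algebra ℤS₃, where L₂ = (1 2) and L₃ = (1 3) + (2 3). -/

import Mathlib

/-- The element `g` of the symmetric group `S₃`, viewed in the group algebra `ℤS₃`. -/
noncomputable def e3 (σ : Equiv.Perm (Fin 3)) : MonoidAlgebra ℤ (Equiv.Perm (Fin 3)) :=
  MonoidAlgebra.of ℤ (Equiv.Perm (Fin 3)) σ

/-- The Jucys–Murphy element `L₂ = (1 2)` of `ℤS₃`. -/
noncomputable def L2 : MonoidAlgebra ℤ (Equiv.Perm (Fin 3)) := e3 (Equiv.swap 0 1)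

/-- The Jucys–Murphy element `L₃ = (1 3) + (2 3)` of `ℤS₃`. -/
noncomputable def L3 : MonoidAlgebra ℤ (Equiv.Perm (Fin 3)) := e3 (Equiv.swap 0 2) + e3 (Equiv.swap 1 2)


open MonoidAlgebra

abbrev G3 := Equiv.Perm (Fin 3)
def s301 : G3 := Equiv.swap 0 1
def s302 : G3 := Equiv.swap 0 2
def s312 : G3 := Equiv.swap 1 2
def s3c : G3 := s301 * s302
def s3c2 : G3 := s302 * s301

lemma s3six (g : G3) : g = 1 ∨ g = s301 ∨ g = s302 ∨ g = s312 ∨ g = s3c ∨ g = s3c2 := by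
  revert g; decide

@[simp] lemma s3m1 : s301 * s301 = (1:G3) := by decide
@[simp] lemma s3m2 : s301 * s302 = s3c := by decide
@[simp] lemma s3m3 : s301 * s312 = s3c2 := by decide
@[simp] lemma s3m4 : s301 * s3c = s302 := by decide
@[simp] lemma s3m5 : s301 * s3c2 = s312 := by decide
@[simp] lemma s3m6 : s302 * s301 = s3c2 := by decide
@[simp] lemma s3m7 : s302 * s302 = (1:G3) := by decide
@[simp] lemma s3m8 : s302 * s312 = s3c := by decide
@[simp] lemma s3m9 : s302 * s3c = s312 := by decide
@[simp] lemma s3m10 : s302 * s3c2 = s301 := by decide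
@[simp] lemma s3m11 : s312 * s301 = s3c := by decide
@[simp] lemma s3m12 : s312 * s302 = s3c2 := by decide
@[simp] lemma s3m13 : s312 * s312 = (1:G3) := by decide
@[simp] lemma s3m14 : s312 * s3c = s301 := by decide
@[simp] lemma s3m15 : s312 * s3c2 = s302 := by decide
@[simp] lemma s3m16 : s3c * s301 = s312 := by decide
@[simp] lemma s3m17 : s3c * s302 = s301 := by decide
@[simp] lemma s3m18 : s3c * s312 = s302 := by decide
@[simp] lemma s3m19 : s3c * s3c = s3c2 := by decide
@[simp] lemma s3m20 : s3c * s3c2 = (1:G3) := by decide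
@[simp] lemma s3m21 : s3c2 * s301 = s302 := by decide
@[simp] lemma s3m22 : s3c2 * s302 = s312 := by decide
@[simp] lemma s3m23 : s3c2 * s312 = s301 := by decide
@[simp] lemma s3m24 : s3c2 * s3c = (1:G3) := by decide
@[simp] lemma s3m25 : s3c2 * s3c2 = s3c := by decide
@[simp] lemma s3i1 : s301⁻¹ = s301 := by decide
@[simp] lemma s3i2 : s302⁻¹ = s302 := by decide
@[simp] lemma s3i3 : s312⁻¹ = s312 := by decide
@[simp] lemma s3i4 : s3c⁻¹ = s3c2 := by decide
@[simp] lemma s3i5 : s3c2⁻¹ = s3c := by decide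

lemma s3add (b c : MonoidAlgebra ℤ G3) (g : G3) : (b + c).coeff g = b.coeff g + c.coeff g := rfl
lemma s3zero (g : G3) : (0 : MonoidAlgebra ℤ G3).coeff g = 0 := rfl
lemma s3smul (r : ℤ) (b : MonoidAlgebra ℤ G3) (g : G3) : (r • b).coeff g = r * b.coeff g := rfl
lemma s3sgl (a : G3) (r : ℤ) (g : G3) : (single a r : MonoidAlgebra ℤ G3).coeff g = if a = g then r else 0 :=
  Finsupp.single_apply
lemma s3one : (1 : MonoidAlgebra ℤ G3) = single 1 1 := rfl

lemma s3hT : L2 + L3 = single s301 1 + single s302 1 + single s312 1 := by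
  simp only [L2, L3, e3, MonoidAlgebra.of_apply, s301, s302, s312, add_assoc]

lemma s3hS : L2 ^ 2 + L3 ^ 2 = single (1:G3) 3 + single s3c 1 + single s3c2 1 := by
  have h : L2 ^ 2 + L3 ^ 2 =
      (single s301 1 * single s301 1) + (single s302 1 * single s302 1 + single s302 1 * single s312 1
        + single s312 1 * single s302 1 + single s312 1 * single s312 1) := by
    simp only [L2, L3, e3, MonoidAlgebra.of_apply, pow_two, mul_add, add_mul, s301, s302, s312]
    abel
  rw [h]
  simp only [single_mul_single, one_mul, s3m1, s3m7, s3m9, s3m13]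
  refine MonoidAlgebra.ext (Finsupp.ext fun g => ?_)
  rcases s3six g with rfl|rfl|rfl|rfl|rfl|rfl <;>
    simp (config := {decide := true}) only [s3add, s3sgl, if_true, if_false]

lemma s3decomp (b : MonoidAlgebra ℤ G3) :
    b = single 1 (b.coeff 1) + single s301 (b.coeff s301) + single s302 (b.coeff s302) + single s312 (b.coeff s312)
      + single s3c (b.coeff s3c) + single s3c2 (b.coeff s3c2) := by
  refine MonoidAlgebra.ext (Finsupp.ext fun g => ?_)
  rcases s3six g with rfl|rfl|rfl|rfl|rfl|rfl <;>
    simp (config := {decide := true}) only [s3add, s3sgl, if_true, if_false] <;> ring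

lemma s3centralT (b : MonoidAlgebra ℤ G3) :
    b * (single s301 1 + single s302 1 + single s312 1)
      = (single s301 1 + single s302 1 + single s312 1) * b := by
  have hc : ∀ (r : ℤ) (σ : G3), single σ r * (single s301 1 + single s302 1 + single s312 1)
      = (single s301 1 + single s302 1 + single s312 1) * single σ r := by
    intro r σ
    rcases s3six σ with rfl|rfl|rfl|rfl|rfl|rfl <;>
      simp only [mul_add, add_mul, single_mul_single, mul_one, one_mul, s3m1, s3m2, s3m3, s3m4,
        s3m5, s3m6, s3m7, s3m8, s3m9, s3m10, s3m11, s3m12, s3m13, s3m14, s3m15, s3m16, s3m17,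
        s3m18, s3m19, s3m20, s3m21, s3m22, s3m23, s3m24, s3m25] <;>
      abel
  conv_lhs => rw [s3decomp b]
  conv_rhs => rw [s3decomp b]
  simp only [add_mul, mul_add, hc]
  simp only [single_mul_single, one_mul, mul_one, s3m1, s3m2, s3m3, s3m4,
    s3m5, s3m6, s3m7, s3m8, s3m9, s3m10, s3m11, s3m12, s3m13, s3m14, s3m15, s3m16, s3m17,
    s3m18, s3m19, s3m20, s3m21, s3m22, s3m23, s3m24, s3m25]
  abel

lemma s3centralS (b : MonoidAlgebra ℤ G3) :
    b * (single (1:G3) 3 + single s3c 1 + single s3c2 1)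
      = (single (1:G3) 3 + single s3c 1 + single s3c2 1) * b := by
  have hc : ∀ (r : ℤ) (σ : G3), single σ r * (single (1:G3) 3 + single s3c 1 + single s3c2 1)
      = (single (1:G3) 3 + single s3c 1 + single s3c2 1) * single σ r := by
    intro r σ
    rcases s3six σ with rfl|rfl|rfl|rfl|rfl|rfl <;>
      simp only [mul_add, add_mul, single_mul_single, mul_one, one_mul, mul_comm r 3, s3m1, s3m2,
        s3m3, s3m4, s3m5, s3m6, s3m7, s3m8, s3m9, s3m10, s3m11, s3m12, s3m13, s3m14, s3m15, s3m16,
        s3m17, s3m18, s3m19, s3m20, s3m21, s3m22, s3m23, s3m24, s3m25] <;>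
      abel
  conv_lhs => rw [s3decomp b]
  conv_rhs => rw [s3decomp b]
  simp only [add_mul, mul_add, hc]
  simp only [single_mul_single, one_mul, mul_one, mul_comm, s3m1, s3m2, s3m3, s3m4,
    s3m5, s3m6, s3m7, s3m8, s3m9, s3m10, s3m11, s3m12, s3m13, s3m14, s3m15, s3m16, s3m17,
    s3m18, s3m19, s3m20, s3m21, s3m22, s3m23, s3m24, s3m25]
  abel

theorem stmt14 :
    LinearIndependent ℤ
      ![(1 : MonoidAlgebra ℤ (Equiv.Perm (Fin 3))), L2 + L3, L2 ^ 2 + L3 ^ 2] ∧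
    Subalgebra.toSubmodule (Subalgebra.center ℤ (MonoidAlgebra ℤ (Equiv.Perm (Fin 3)))) =
      Submodule.span ℤ
        {(1 : MonoidAlgebra ℤ (Equiv.Perm (Fin 3))), L2 + L3, L2 ^ 2 + L3 ^ 2} := by
  constructor
  · rw [Fintype.linearIndependent_iff]
    intro g hg
    rw [Fin.sum_univ_three] at hg
    simp only [Matrix.cons_val_zero, Matrix.cons_val_one, Matrix.head_cons, Matrix.cons_val_two,
      Matrix.tail_cons] at hg
    rw [s3hT, s3hS] at hg
    have h1 : g 1 = 0 := by
      have h := Finsupp.ext_iff.mp (congrArg MonoidAlgebra.coeff hg) s301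
      simpa (config := {decide := true}) only [s3add, s3smul, s3sgl, s3one, s3zero, if_true,
        if_false, mul_zero, mul_one, add_zero, zero_add] using h
    have h2 : g 2 = 0 := by
      have h := Finsupp.ext_iff.mp (congrArg MonoidAlgebra.coeff hg) s3c
      simpa (config := {decide := true}) only [s3add, s3smul, s3sgl, s3one, s3zero, if_true,
        if_false, mul_zero, mul_one, add_zero, zero_add] using h
    have h0 : g 0 + g 2 * 3 = 0 := by
      have h := Finsupp.ext_iff.mp (congrArg MonoidAlgebra.coeff hg) 1
      simpa (config := {decide := true}) only [s3add, s3smul, s3sgl, s3one, s3zero, if_true,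
        if_false, mul_zero, mul_one, add_zero, zero_add] using h
    have h0' : g 0 = 0 := by linarith
    intro i
    fin_cases i <;> [exact h0'; exact h1; exact h2]
  · apply le_antisymm
    · intro x hx
      rw [Subalgebra.mem_toSubmodule] at hx
      have hxc : ∀ b, b * x = x * b := Subalgebra.mem_center_iff.mp hx
      have key : ∀ σ g : G3, x.coeff (σ⁻¹ * g) = x.coeff (g * σ⁻¹) := by
        intro σ g
        have h2 : (single σ (1 : ℤ) * x).coeff g = (x * single σ (1 : ℤ)).coeff g := by rw [hxc (single σ (1 : ℤ))]
        rwa [MonoidAlgebra.coeff_single_mul_apply, MonoidAlgebra.coeff_mul_single_apply, one_mul, mul_one] at h2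
      have r1 : x.coeff s301 = x.coeff s302 := by
        have h := key s312 s3c
        rwa [show s312⁻¹ * s3c = s301 by decide, show s3c * s312⁻¹ = s302 by decide] at h
      have r2 : x.coeff s302 = x.coeff s312 := by
        have h := key s301 s3c
        rwa [show s301⁻¹ * s3c = s302 by decide, show s3c * s301⁻¹ = s312 by decide] at h
      have r3 : x.coeff s3c = x.coeff s3c2 := by
        have h := key s301 s302
        rwa [show s301⁻¹ * s302 = s3c by decide, show s302 * s301⁻¹ = s3c2 by decide] at h
      have rep : x = (x.coeff 1 - 3 * x.coeff s3c) • (1 : MonoidAlgebra ℤ G3) + (x.coeff s301) • (L2 + L3)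
          + (x.coeff s3c) • (L2 ^ 2 + L3 ^ 2) := by
        rw [s3hT, s3hS]
        refine MonoidAlgebra.ext (Finsupp.ext fun g => ?_)
        rcases s3six g with rfl|rfl|rfl|rfl|rfl|rfl <;>
          simp (config := {decide := true}) only [s3add, s3smul, s3sgl, s3one, if_true,
            if_false] <;>
          ring_nf <;> linarith [r1, r2, r3]
      rw [rep]
      refine add_mem (add_mem (Submodule.smul_mem _ _ ?_) (Submodule.smul_mem _ _ ?_))
        (Submodule.smul_mem _ _ ?_)
      · exact Submodule.subset_span (Set.mem_insert _ _)
      · exact Submodule.subset_span (Set.mem_insert_of_mem _ (Set.mem_insert _ _))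
      · exact Submodule.subset_span (Set.mem_insert_of_mem _ (Set.mem_insert_of_mem _ rfl))
    · rw [Submodule.span_le]
      intro y hy
      simp only [Set.mem_insert_iff, Set.mem_singleton_iff] at hy
      rw [SetLike.mem_coe, Subalgebra.mem_toSubmodule]
      rcases hy with rfl | rfl | rfl
      · exact Subalgebra.one_mem _
      · refine Subalgebra.mem_center_iff.mpr fun b => ?_
        rw [s3hT]; exact s3centralT b
      · refine Subalgebra.mem_center_iff.mpr fun b => ?_
        rw [s3hS]; exact s3centralS b
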